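/- arXiv:2203.02053 — 3 statements merged into one kernel-verified Lean document; each statement's English description precedes it below -/
import Mathlib

section
/- Let W ∈ ℝ^{d_out × d_in} be a random matrix whose entries W_{k,l} are independent, each distributed according to a distribution that is symmetric about 0 with variance 1/d_out, and let b ∈ ℝ^{d_out} have independent entries, each symmetric about 0 with variance 1/d_out, with W and b independent. Then for any fixed vectors u, v ∈ ℝ^{d_in}: 1 + ⟨u,v⟩ ≤ E[(Wu + b)ᵀ(Wv + b)] ≤ 2·E[φ(Wu + b)ᵀ φ(Wv + b)]. -/
open MeasureTheory ProbabilityTheory Real Matrix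

noncomputable section

/-- The ReLU activation applied elementwise to a vector. -/
def reluV {n : ℕ} (x : Fin n → ℝ) : Fin n → ℝ := fun i => max (x i) 0


/-- L2 × L2 product is integrable. -/
lemma aux_mul_integrable {Ω : Type*} [MeasurableSpace Ω] {μ : Measure Ω}
    {f g : Ω → ℝ} (hf : MemLp f 2 μ) (hg : MemLp g 2 μ) :
    Integrable (fun ω => f ω * g ω) μ := by
  have h := hf.integrable_sq.add hg.integrable_sq
  refine h.mono (hf.1.mul hg.1) (ae_of_all _ fun ω => ?_)
  have h1 : |f ω * g ω| ≤ (f ω ^ 2 + g ω ^ 2) := by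
    rw [abs_mul]
    nlinarith [sq_nonneg (|f ω| - |g ω|), sq_abs (f ω), sq_abs (g ω), abs_nonneg (f ω), abs_nonneg (g ω)]
  calc ‖f ω * g ω‖ = |f ω * g ω| := rfl
    _ ≤ f ω ^ 2 + g ω ^ 2 := h1
    _ ≤ ‖f ω ^ 2 + g ω ^ 2‖ := le_abs_self _

/-- A symmetric integrable real random variable has mean zero. -/
lemma aux_mean_zero {Ω : Type*} [MeasurableSpace Ω] {μ : Measure Ω}
    {f : Ω → ℝ} (hmeas : Measurable f)
    (hsymm : Measure.map f μ = Measure.map (fun ω => -f ω) μ) : ∫ ω, f ω ∂μ = 0 := by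
  have h1 : ∫ ω, f ω ∂μ = ∫ x, (fun y : ℝ => y) x ∂(Measure.map f μ) :=
    (integral_map hmeas.aemeasurable aestronglyMeasurable_id).symm
  have h2 : ∫ x, (fun y : ℝ => y) x ∂(Measure.map (fun ω => -f ω) μ) = ∫ ω, -f ω ∂μ :=
    integral_map hmeas.neg.aemeasurable aestronglyMeasurable_id
  have h3 : ∫ ω, f ω ∂μ = ∫ ω, -f ω ∂μ := by rw [h1, hsymm]; exact h2
  have h4 : ∫ ω, -f ω ∂μ = -∫ ω, f ω ∂μ := integral_neg f
  linarith

/-- The joint law of a finite independent family equals the product of marginals. -/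
lemma aux_map_eq_pi {ι Ω : Type*} [Fintype ι] [MeasurableSpace Ω] {μ : Measure Ω}
    [IsProbabilityMeasure μ] {f : ι → Ω → ℝ} (hmeas : ∀ i, Measurable (f i))
    (hindep : iIndepFun f μ) :
    Measure.map (fun ω i => f i ω) μ = Measure.pi (fun i => Measure.map (f i) μ) := by
  have hT : Measurable (fun ω i => f i ω) := measurable_pi_iff.2 hmeas
  refine (Measure.pi_eq fun s hs => ?_).symm
  rw [Measure.map_apply hT (MeasurableSet.univ_pi hs)]
  have hpre : (fun ω i => f i ω) ⁻¹' (Set.pi Set.univ s) = ⋂ i ∈ Finset.univ, f i ⁻¹' s i := by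
    ext ω; simp [Set.mem_pi]
  rw [hpre, hindep.measure_inter_preimage_eq_mul Finset.univ (fun i _ => hs i)]
  exact Finset.prod_congr rfl fun i _ => (Measure.map_apply (hmeas i) (hs i)).symm

/-- Joint symmetry of a finite independent symmetric family. -/
lemma aux_joint_symm {ι Ω : Type*} [Fintype ι] [MeasurableSpace Ω] {μ : Measure Ω}
    [IsProbabilityMeasure μ] {f : ι → Ω → ℝ} (hmeas : ∀ i, Measurable (f i))
    (hsymm : ∀ i, Measure.map (f i) μ = Measure.map (fun ω => -f i ω) μ)
    (hindep : iIndepFun f μ) :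
    Measure.map (fun ω i => f i ω) μ = Measure.map (fun ω i => -f i ω) μ := by
  have hneg : iIndepFun (fun i ω => -f i ω) μ :=
    hindep.comp (fun _ => Neg.neg) (fun _ => measurable_neg)
  rw [aux_map_eq_pi hmeas hindep, aux_map_eq_pi (f := fun i ω => -f i ω) (fun i => (hmeas i).neg) hneg]
  exact congrArg Measure.pi (funext fun i => hsymm i)

lemma aux_integral_symm {ι Ω : Type*} [Fintype ι] [MeasurableSpace Ω] {μ : Measure Ω}
    [IsProbabilityMeasure μ] {f : ι → Ω → ℝ} (hmeas : ∀ i, Measurable (f i))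
    (hsymm : ∀ i, Measure.map (f i) μ = Measure.map (fun ω => -f i ω) μ)
    (hindep : iIndepFun f μ)
    (Φ : (ι → ℝ) → ℝ) (hΦ : Measurable Φ) :
    ∫ ω, Φ (fun i => f i ω) ∂μ = ∫ ω, Φ (fun i => -f i ω) ∂μ := by
  have hT : Measurable (fun ω i => f i ω) := measurable_pi_iff.2 hmeas
  have hT' : Measurable (fun ω i => -f i ω) := measurable_pi_iff.2 fun i => (hmeas i).neg
  rw [← integral_map hT.aemeasurable hΦ.aestronglyMeasurable,
    ← integral_map hT'.aemeasurable hΦ.aestronglyMeasurable,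
    aux_joint_symm hmeas hsymm hindep]


lemma aux_relu_abs_le (a : ℝ) : |max a 0| ≤ |a| := by
  rcases le_total a 0 with h|h
  · simp [max_eq_right h]
  · simp [max_eq_left h]

lemma aux_prod_id (a b : ℝ) :
    a * b = max a 0 * max b 0 + max (-a) 0 * max (-b) 0
      - max a 0 * max (-b) 0 - max (-a) 0 * max b 0 := by
  have ha : max a 0 - max (-a) 0 = a := by
    rcases le_total a 0 with h|h
    · simp [max_eq_right h, max_eq_left (neg_nonneg.2 h)]
    · simp [max_eq_left h, max_eq_right (neg_nonpos.2 h)]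
  have hb : max b 0 - max (-b) 0 = b := by
    rcases le_total b 0 with h|h
    · simp [max_eq_right h, max_eq_left (neg_nonneg.2 h)]
    · simp [max_eq_left h, max_eq_right (neg_nonpos.2 h)]
  calc a * b = (max a 0 - max (-a) 0) * (max b 0 - max (-b) 0) := by rw [ha, hb]
    _ = _ := by ring

lemma aux_relu_memL2 {Ω : Type*} [MeasurableSpace Ω] {μ : Measure Ω} {f : Ω → ℝ}
    (hf : MemLp f 2 μ) (hm : Measurable f) :
    MemLp (fun ω => max (f ω) 0) 2 μ :=
  hf.of_le (hm.max measurable_const).aestronglyMeasurable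
    (ae_of_all _ fun ω => aux_relu_abs_le (f ω))

/-- MemLp of one coordinate of `Wu + b`. -/
lemma aux_XL2 {Ω : Type*} [MeasurableSpace Ω] {μ : Measure Ω}
    {d_in d_out : ℕ} {W : Ω → Matrix (Fin d_out) (Fin d_in) ℝ} {b : Ω → Fin d_out → ℝ}
    (hWL2 : ∀ k l, MemLp (fun ω => W ω k l) 2 μ)
    (hbL2 : ∀ k, MemLp (fun ω => b ω k) 2 μ)
    (u : Fin d_in → ℝ) (k : Fin d_out) :
    MemLp (fun ω => ∑ l, W ω k l * u l + b ω k) 2 μ := by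
  have hs : MemLp (fun ω => ∑ l, W ω k l * u l) 2 μ := by
    apply memLp_finset_sum
    intro l _
    have h1 : (fun ω => W ω k l * u l) = (fun ω => u l * W ω k l) := funext fun ω => mul_comm _ _
    rw [h1]; exact (hWL2 k l).const_mul (u l)
  exact hs.add (hbL2 k)

lemma aux_Xmeas {Ω : Type*} [MeasurableSpace Ω]
    {d_in d_out : ℕ} {W : Ω → Matrix (Fin d_out) (Fin d_in) ℝ} {b : Ω → Fin d_out → ℝ}
    (hWmeas : ∀ k l, Measurable fun ω => W ω k l)
    (hbmeas : ∀ k, Measurable fun ω => b ω k)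
    (u : Fin d_in → ℝ) (k : Fin d_out) :
    Measurable (fun ω => ∑ l, W ω k l * u l + b ω k) :=
  (Finset.measurable_sum Finset.univ fun l _ => (hWmeas k l).mul_const (u l)).add (hbmeas k)
/-- Second-moment computation for one row. -/
lemma aux_row_moment
    {Ω : Type*} [MeasurableSpace Ω] (μ : Measure Ω) [IsProbabilityMeasure μ]
    (d_in d_out : ℕ)
    (W : Ω → Matrix (Fin d_out) (Fin d_in) ℝ) (b : Ω → Fin d_out → ℝ)
    (hWmeas : ∀ k l, Measurable fun ω => W ω k l)
    (hbmeas : ∀ k, Measurable fun ω => b ω k)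
    (hWsymm : ∀ k l, Measure.map (fun ω => W ω k l) μ = Measure.map (fun ω => -W ω k l) μ)
    (hbsymm : ∀ k, Measure.map (fun ω => b ω k) μ = Measure.map (fun ω => -b ω k) μ)
    (hWvar : ∀ k l, variance (fun ω => W ω k l) μ = 1 / d_out)
    (hbvar : ∀ k, variance (fun ω => b ω k) μ = 1 / d_out)
    (hWL2 : ∀ k l, MemLp (fun ω => W ω k l) 2 μ)
    (hbL2 : ∀ k, MemLp (fun ω => b ω k) 2 μ)
    (hindep : iIndepFun
      (Sum.elim (fun (kl : Fin d_out × Fin d_in) (ω : Ω) => W ω kl.1 kl.2)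
        (fun (k : Fin d_out) (ω : Ω) => b ω k)) μ)
    (u v : Fin d_in → ℝ) (k : Fin d_out) :
    ∫ ω, (∑ l, W ω k l * u l + b ω k) * (∑ l, W ω k l * v l + b ω k) ∂μ
      = (1 + u ⬝ᵥ v) / d_out := by
  -- basic entry facts
  have hW0 : ∀ l, ∫ ω, W ω k l ∂μ = 0 := fun l => aux_mean_zero (hWmeas k l) (hWsymm k l)
  have hb0 : ∫ ω, b ω k ∂μ = 0 := aux_mean_zero (hbmeas k) (hbsymm k)
  have hW2 : ∀ l, ∫ ω, W ω k l * W ω k l ∂μ = 1 / d_out := by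
    intro l
    have h := variance_eq_sub (hWL2 k l)
    rw [hWvar k l, hW0 l] at h
    simp only [Pi.pow_apply] at h
    have h2 : ∫ ω, W ω k l * W ω k l ∂μ = ∫ ω, (W ω k l) ^ 2 ∂μ := by
      congr 1; funext ω; ring
    rw [h2]; linarith [h]
  have hb2 : ∫ ω, b ω k * b ω k ∂μ = 1 / d_out := by
    have h := variance_eq_sub (hbL2 k)
    rw [hbvar k, hb0] at h
    simp only [Pi.pow_apply] at h
    have h2 : ∫ ω, b ω k * b ω k ∂μ = ∫ ω, (b ω k) ^ 2 ∂μ := by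
      congr 1; funext ω; ring
    rw [h2]; linarith [h]
  -- independence cross moments
  have hWW : ∀ l m : Fin d_in, l ≠ m → ∫ ω, W ω k l * W ω k m ∂μ = 0 := by
    intro l m hlm
    have hij : (Sum.inl (k, l) : (Fin d_out × Fin d_in) ⊕ Fin d_out) ≠ Sum.inl (k, m) := by
      simp [Prod.ext_iff, hlm]
    have hInd : IndepFun (fun ω => W ω k l) (fun ω => W ω k m) μ :=
      hindep.indepFun hij
    have h := hInd.integral_mul_eq_mul_integral (hWL2 k l).1 (hWL2 k m).1
    simpa [Pi.mul_apply, hW0 l, hW0 m] using h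
  have hWb : ∀ l : Fin d_in, ∫ ω, W ω k l * b ω k ∂μ = 0 := by
    intro l
    have hij : (Sum.inl (k, l) : (Fin d_out × Fin d_in) ⊕ Fin d_out) ≠ Sum.inr k := by simp
    have hInd : IndepFun (fun ω => W ω k l) (fun ω => b ω k) μ := hindep.indepFun hij
    have h := hInd.integral_mul_eq_mul_integral (hWL2 k l).1 (hbL2 k).1
    simpa [Pi.mul_apply, hW0 l, hb0] using h
  -- MemLp of scaled entries
  have hMemu : ∀ l, MemLp (fun ω => W ω k l * u l) 2 μ := by
    intro l
    have h1 : (fun ω => W ω k l * u l) = (fun ω => u l * W ω k l) := funext fun ω => mul_comm _ _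
    rw [h1]; exact (hWL2 k l).const_mul (u l)
  have hMemv : ∀ l, MemLp (fun ω => W ω k l * v l) 2 μ := by
    intro l
    have h1 : (fun ω => W ω k l * v l) = (fun ω => v l * W ω k l) := funext fun ω => mul_comm _ _
    rw [h1]; exact (hWL2 k l).const_mul (v l)
  have hIWW : ∀ l m : Fin d_in, Integrable (fun ω => (W ω k l * u l) * (W ω k m * v m)) μ :=
    fun l m => aux_mul_integrable (hMemu l) (hMemv m)
  have hIWb : ∀ l : Fin d_in, Integrable (fun ω => (W ω k l * u l) * b ω k) μ :=
    fun l => aux_mul_integrable (hMemu l) (hbL2 k)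
  have hIbW : ∀ m : Fin d_in, Integrable (fun ω => b ω k * (W ω k m * v m)) μ :=
    fun m => aux_mul_integrable (hbL2 k) (hMemv m)
  have hIbb : Integrable (fun ω => b ω k * b ω k) μ := aux_mul_integrable (hbL2 k) (hbL2 k)
  -- expand the product
  have expand : (fun ω => (∑ l, W ω k l * u l + b ω k) * (∑ l, W ω k l * v l + b ω k))
      = fun ω => (∑ l, ∑ m, (W ω k l * u l) * (W ω k m * v m))
        + ((∑ l, (W ω k l * u l) * b ω k)
          + ((∑ m, b ω k * (W ω k m * v m)) + b ω k * b ω k)) := by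
    funext ω
    rw [add_mul, mul_add, mul_add, Finset.sum_mul_sum, Finset.sum_mul, Finset.mul_sum]
    ring
  have hI1 : Integrable (fun ω => ∑ l, ∑ m, (W ω k l * u l) * (W ω k m * v m)) μ :=
    integrable_finset_sum _ fun l _ => integrable_finset_sum _ fun m _ => hIWW l m
  have hI2 : Integrable (fun ω => ∑ l, (W ω k l * u l) * b ω k) μ :=
    integrable_finset_sum _ fun l _ => hIWb l
  have hI3 : Integrable (fun ω => ∑ m, b ω k * (W ω k m * v m)) μ :=
    integrable_finset_sum _ fun m _ => hIbW m
  have hI34 : Integrable (fun ω => (∑ m, b ω k * (W ω k m * v m)) + b ω k * b ω k) μ :=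
    hI3.add hIbb
  have hI234 : Integrable (fun ω => (∑ l, (W ω k l * u l) * b ω k)
      + ((∑ m, b ω k * (W ω k m * v m)) + b ω k * b ω k)) μ := hI2.add hI34
  rw [expand, integral_add hI1 hI234, integral_add hI2 hI34, integral_add hI3 hIbb]
  -- compute each piece
  have hT1 : ∫ ω, ∑ l, ∑ m, (W ω k l * u l) * (W ω k m * v m) ∂μ = (u ⬝ᵥ v) / d_out := by
    rw [integral_finset_sum _ fun l _ => integrable_finset_sum _ fun m _ => hIWW l m]
    have hstep : ∀ l : Fin d_in,
        ∫ ω, ∑ m, (W ω k l * u l) * (W ω k m * v m) ∂μ = u l * v l * (1 / d_out) := by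
      intro l
      rw [integral_finset_sum _ fun m _ => hIWW l m]
      have hterm : ∀ m : Fin d_in,
          ∫ ω, (W ω k l * u l) * (W ω k m * v m) ∂μ = u l * v m * ∫ ω, W ω k l * W ω k m ∂μ := by
        intro m
        have h1 : (fun ω => (W ω k l * u l) * (W ω k m * v m))
            = fun ω => (u l * v m) * (W ω k l * W ω k m) := funext fun ω => by ring
        rw [h1, MeasureTheory.integral_const_mul]
      rw [Finset.sum_congr rfl fun m _ => hterm m]
      rw [Finset.sum_eq_single l]
      · rw [hW2 l]
      · intro m _ hml
        rw [hWW l m (Ne.symm hml), mul_zero]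
      · intro h; exact absurd (Finset.mem_univ l) h
    rw [Finset.sum_congr rfl fun l _ => hstep l]
    rw [dotProduct, Finset.sum_div]
    exact Finset.sum_congr rfl fun l _ => by ring
  have hT2 : ∫ ω, ∑ l, (W ω k l * u l) * b ω k ∂μ = 0 := by
    rw [integral_finset_sum _ fun l _ => hIWb l]
    refine Finset.sum_eq_zero fun l _ => ?_
    have h1 : (fun ω => (W ω k l * u l) * b ω k)
        = fun ω => u l * (W ω k l * b ω k) := funext fun ω => by ring
    rw [h1, MeasureTheory.integral_const_mul, hWb l, mul_zero]
  have hT3 : ∫ ω, ∑ m, b ω k * (W ω k m * v m) ∂μ = 0 := by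
    rw [integral_finset_sum _ fun m _ => hIbW m]
    refine Finset.sum_eq_zero fun m _ => ?_
    have h1 : (fun ω => b ω k * (W ω k m * v m))
        = fun ω => v m * (W ω k m * b ω k) := funext fun ω => by ring
    rw [h1, MeasureTheory.integral_const_mul, hWb m, mul_zero]
  rw [hT1, hT2, hT3, hb2]
  ring

lemma aux_row_relu
    {Ω : Type*} [MeasurableSpace Ω] (μ : Measure Ω) [IsProbabilityMeasure μ]
    (d_in d_out : ℕ)
    (W : Ω → Matrix (Fin d_out) (Fin d_in) ℝ) (b : Ω → Fin d_out → ℝ)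
    (hWmeas : ∀ k l, Measurable fun ω => W ω k l)
    (hbmeas : ∀ k, Measurable fun ω => b ω k)
    (hWsymm : ∀ k l, Measure.map (fun ω => W ω k l) μ = Measure.map (fun ω => -W ω k l) μ)
    (hbsymm : ∀ k, Measure.map (fun ω => b ω k) μ = Measure.map (fun ω => -b ω k) μ)
    (hWL2 : ∀ k l, MemLp (fun ω => W ω k l) 2 μ)
    (hbL2 : ∀ k, MemLp (fun ω => b ω k) 2 μ)
    (hindep : iIndepFun
      (Sum.elim (fun (kl : Fin d_out × Fin d_in) (ω : Ω) => W ω kl.1 kl.2)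
        (fun (k : Fin d_out) (ω : Ω) => b ω k)) μ)
    (u v : Fin d_in → ℝ) (k : Fin d_out) :
    ∫ ω, (∑ l, W ω k l * u l + b ω k) * (∑ l, W ω k l * v l + b ω k) ∂μ
      ≤ 2 * ∫ ω, max (∑ l, W ω k l * u l + b ω k) 0 * max (∑ l, W ω k l * v l + b ω k) 0 ∂μ := by
  set X : Ω → ℝ := fun ω => ∑ l, W ω k l * u l + b ω k with hX
  set Y : Ω → ℝ := fun ω => ∑ l, W ω k l * v l + b ω k with hY
  -- measurability and L2
  have hXmeas : Measurable X :=
    (Finset.measurable_sum Finset.univ fun l _ => (hWmeas k l).mul_const (u l)).add (hbmeas k)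
  have hYmeas : Measurable Y :=
    (Finset.measurable_sum Finset.univ fun l _ => (hWmeas k l).mul_const (v l)).add (hbmeas k)
  have hXL2 : MemLp X 2 μ := by
    have hs : MemLp (fun ω => ∑ l, W ω k l * u l) 2 μ := by
      apply memLp_finset_sum
      intro l _
      have h1 : (fun ω => W ω k l * u l) = (fun ω => u l * W ω k l) := funext fun ω => mul_comm _ _
      rw [h1]; exact (hWL2 k l).const_mul (u l)
    exact hs.add (hbL2 k)
  have hYL2 : MemLp Y 2 μ := by
    have hs : MemLp (fun ω => ∑ l, W ω k l * v l) 2 μ := by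
      apply memLp_finset_sum
      intro l _
      have h1 : (fun ω => W ω k l * v l) = (fun ω => v l * W ω k l) := funext fun ω => mul_comm _ _
      rw [h1]; exact (hWL2 k l).const_mul (v l)
    exact hs.add (hbL2 k)
  -- relu L2 memberships and integrabilities
  have hXp : MemLp (fun ω => max (X ω) 0) 2 μ := aux_relu_memL2 hXL2 hXmeas
  have hXm : MemLp (fun ω => max (-X ω) 0) 2 μ := aux_relu_memL2 hXL2.neg hXmeas.neg
  have hYp : MemLp (fun ω => max (Y ω) 0) 2 μ := aux_relu_memL2 hYL2 hYmeas
  have hYm : MemLp (fun ω => max (-Y ω) 0) 2 μ := aux_relu_memL2 hYL2.neg hYmeas.neg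
  have hIpp : Integrable (fun ω => max (X ω) 0 * max (Y ω) 0) μ := aux_mul_integrable hXp hYp
  have hImm : Integrable (fun ω => max (-X ω) 0 * max (-Y ω) 0) μ := aux_mul_integrable hXm hYm
  have hIpm : Integrable (fun ω => max (X ω) 0 * max (-Y ω) 0) μ := aux_mul_integrable hXp hYm
  have hImp : Integrable (fun ω => max (-X ω) 0 * max (Y ω) 0) μ := aux_mul_integrable hXm hYp
  -- symmetry: ∫ φ(X)φ(Y) = ∫ φ(-X)φ(-Y)
  have hsymmEq : ∫ ω, max (X ω) 0 * max (Y ω) 0 ∂μ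
      = ∫ ω, max (-X ω) 0 * max (-Y ω) 0 ∂μ := by
    classical
    set F : ((Fin d_out × Fin d_in) ⊕ Fin d_out) → Ω → ℝ :=
      Sum.elim (fun kl ω => W ω kl.1 kl.2) (fun k' ω => b ω k') with hF
    have hFmeas : ∀ i, Measurable (F i) := by
      rintro (⟨k', l⟩ | k')
      · exact hWmeas k' l
      · exact hbmeas k'
    have hFsymm : ∀ i, Measure.map (F i) μ = Measure.map (fun ω => -F i ω) μ := by
      rintro (⟨k', l⟩ | k')
      · exact hWsymm k' l
      · exact hbsymm k'
    set Φ : (((Fin d_out × Fin d_in) ⊕ Fin d_out) → ℝ) → ℝ := fun g =>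
      max (∑ l, g (Sum.inl (k, l)) * u l + g (Sum.inr k)) 0 *
        max (∑ l, g (Sum.inl (k, l)) * v l + g (Sum.inr k)) 0 with hΦdef
    have hΦ : Measurable Φ := by
      apply Measurable.mul
      · exact ((Finset.measurable_sum Finset.univ fun l _ =>
          (by fun_prop)).add
          (measurable_pi_apply (Sum.inr k))).max measurable_const
      · exact ((Finset.measurable_sum Finset.univ fun l _ =>
          (by fun_prop)).add
          (measurable_pi_apply (Sum.inr k))).max measurable_const
    have h := aux_integral_symm hFmeas hFsymm hindep Φ hΦ
    have hL : (fun ω => Φ (fun i => F i ω)) = fun ω => max (X ω) 0 * max (Y ω) 0 := by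
      funext ω; simp only [hΦdef, hF, Sum.elim_inl, Sum.elim_inr, hX, hY]
    have hR : (fun ω => Φ (fun i => -F i ω)) = fun ω => max (-X ω) 0 * max (-Y ω) 0 := by
      funext ω
      simp only [hΦdef, hF, Sum.elim_inl, Sum.elim_inr, hX, hY]
      congr 2 <;> · rw [neg_add, ← Finset.sum_neg_distrib]
                    congr 1
                    exact Finset.sum_congr rfl fun l _ => by ring
    rw [← hL, ← hR]
    exact h
  -- pointwise identity and conclusion
  have hexp : ∫ ω, X ω * Y ω ∂μ
      = ∫ ω, max (X ω) 0 * max (Y ω) 0 ∂μ + ∫ ω, max (-X ω) 0 * max (-Y ω) 0 ∂μ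
        - ∫ ω, max (X ω) 0 * max (-Y ω) 0 ∂μ - ∫ ω, max (-X ω) 0 * max (Y ω) 0 ∂μ := by
    have hpt : (fun ω => X ω * Y ω) = fun ω =>
        max (X ω) 0 * max (Y ω) 0 + max (-X ω) 0 * max (-Y ω) 0
          - max (X ω) 0 * max (-Y ω) 0 - max (-X ω) 0 * max (Y ω) 0 :=
      funext fun ω => aux_prod_id (X ω) (Y ω)
    have hIa : Integrable (fun ω => max (X ω) 0 * max (Y ω) 0
        + max (-X ω) 0 * max (-Y ω) 0) μ := hIpp.add hImm
    have hIb : Integrable (fun ω => max (X ω) 0 * max (Y ω) 0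
        + max (-X ω) 0 * max (-Y ω) 0 - max (X ω) 0 * max (-Y ω) 0) μ := hIa.sub hIpm
    rw [hpt, integral_sub hIb hImp, integral_sub hIa hIpm, integral_add hIpp hImm]
  have hpm_nonneg : 0 ≤ ∫ ω, max (X ω) 0 * max (-Y ω) 0 ∂μ :=
    integral_nonneg fun ω => mul_nonneg (le_max_right _ _) (le_max_right _ _)
  have hmp_nonneg : 0 ≤ ∫ ω, max (-X ω) 0 * max (Y ω) 0 ∂μ :=
    integral_nonneg fun ω => mul_nonneg (le_max_right _ _) (le_max_right _ _)
  calc ∫ ω, X ω * Y ω ∂μ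
      ≤ ∫ ω, max (X ω) 0 * max (Y ω) 0 ∂μ + ∫ ω, max (-X ω) 0 * max (-Y ω) 0 ∂μ := by
        rw [hexp]; linarith
    _ = 2 * ∫ ω, max (X ω) 0 * max (Y ω) 0 ∂μ := by rw [← hsymmEq]; ring

/-- Let `W ∈ ℝ^{d_out × d_in}` be a random matrix whose entries are independent,
each distributed symmetrically about 0 with variance `1/d_out`, and let `b ∈ ℝ^{d_out}` have
independent entries, each symmetric about 0 with variance `1/d_out`, with `W` and `b`
independent (all entries jointly independent). Then for any fixed `u, v ∈ ℝ^{d_in}`: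
`1 + ⟨u,v⟩ ≤ E[(Wu + b)ᵀ(Wv + b)] ≤ 2·E[φ(Wu + b)ᵀ φ(Wv + b)]`. -/
theorem statement1
    {Ω : Type*} [MeasurableSpace Ω] (μ : Measure Ω) [IsProbabilityMeasure μ]
    (d_in d_out : ℕ) (hdout : 0 < d_out)
    (W : Ω → Matrix (Fin d_out) (Fin d_in) ℝ) (b : Ω → Fin d_out → ℝ)
    (hWmeas : ∀ k l, Measurable fun ω => W ω k l)
    (hbmeas : ∀ k, Measurable fun ω => b ω k)
    (hWsymm : ∀ k l, Measure.map (fun ω => W ω k l) μ = Measure.map (fun ω => -W ω k l) μ)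
    (hbsymm : ∀ k, Measure.map (fun ω => b ω k) μ = Measure.map (fun ω => -b ω k) μ)
    (hWvar : ∀ k l, variance (fun ω => W ω k l) μ = 1 / d_out)
    (hbvar : ∀ k, variance (fun ω => b ω k) μ = 1 / d_out)
    (hWL2 : ∀ k l, MemLp (fun ω => W ω k l) 2 μ)
    (hbL2 : ∀ k, MemLp (fun ω => b ω k) 2 μ)
    (hindep : iIndepFun
      (Sum.elim (fun (kl : Fin d_out × Fin d_in) (ω : Ω) => W ω kl.1 kl.2)
        (fun (k : Fin d_out) (ω : Ω) => b ω k)) μ)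
    (u v : Fin d_in → ℝ) :
    1 + u ⬝ᵥ v ≤ ∫ ω, ((W ω).mulVec u + b ω) ⬝ᵥ ((W ω).mulVec v + b ω) ∂μ ∧
      ∫ ω, ((W ω).mulVec u + b ω) ⬝ᵥ ((W ω).mulVec v + b ω) ∂μ ≤
        2 * ∫ ω, reluV ((W ω).mulVec u + b ω) ⬝ᵥ reluV ((W ω).mulVec v + b ω) ∂μ := by
  classical
  have hdot : (fun ω => ((W ω).mulVec u + b ω) ⬝ᵥ ((W ω).mulVec v + b ω))
      = fun ω => ∑ k, (∑ l, W ω k l * u l + b ω k) * (∑ l, W ω k l * v l + b ω k) := by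
    funext ω; simp [dotProduct, Matrix.mulVec, Pi.add_apply]
  have hdotr : (fun ω => reluV ((W ω).mulVec u + b ω) ⬝ᵥ reluV ((W ω).mulVec v + b ω))
      = fun ω => ∑ k, max (∑ l, W ω k l * u l + b ω k) 0
          * max (∑ l, W ω k l * v l + b ω k) 0 := by
    funext ω; simp [dotProduct, Matrix.mulVec, reluV, Pi.add_apply]
  have hIprod : ∀ k : Fin d_out, Integrable
      (fun ω => (∑ l, W ω k l * u l + b ω k) * (∑ l, W ω k l * v l + b ω k)) μ :=
    fun k => aux_mul_integrable (aux_XL2 hWL2 hbL2 u k) (aux_XL2 hWL2 hbL2 v k)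
  have hIrelu : ∀ k : Fin d_out, Integrable
      (fun ω => max (∑ l, W ω k l * u l + b ω k) 0
        * max (∑ l, W ω k l * v l + b ω k) 0) μ :=
    fun k => aux_mul_integrable
      (aux_relu_memL2 (aux_XL2 hWL2 hbL2 u k) (aux_Xmeas hWmeas hbmeas u k))
      (aux_relu_memL2 (aux_XL2 hWL2 hbL2 v k) (aux_Xmeas hWmeas hbmeas v k))
  have hsum : ∫ ω, ((W ω).mulVec u + b ω) ⬝ᵥ ((W ω).mulVec v + b ω) ∂μ
      = ∑ k, ∫ ω, (∑ l, W ω k l * u l + b ω k) * (∑ l, W ω k l * v l + b ω k) ∂μ := by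
    simp only [hdot]
    exact integral_finset_sum _ fun k _ => hIprod k
  have hsumr : ∫ ω, reluV ((W ω).mulVec u + b ω) ⬝ᵥ reluV ((W ω).mulVec v + b ω) ∂μ
      = ∑ k, ∫ ω, max (∑ l, W ω k l * u l + b ω k) 0
          * max (∑ l, W ω k l * v l + b ω k) 0 ∂μ := by
    simp only [hdotr]
    exact integral_finset_sum _ fun k _ => hIrelu k
  have hE : ∫ ω, ((W ω).mulVec u + b ω) ⬝ᵥ ((W ω).mulVec v + b ω) ∂μ = 1 + u ⬝ᵥ v := by
    rw [hsum, Finset.sum_congr rfl fun k _ => aux_row_moment μ d_in d_out W b hWmeas hbmeas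
      hWsymm hbsymm hWvar hbvar hWL2 hbL2 hindep u v k]
    rw [Finset.sum_const, Finset.card_univ, Fintype.card_fin]
    have hd : (d_out : ℝ) ≠ 0 := Nat.cast_ne_zero.2 hdout.ne'
    rw [nsmul_eq_mul]
    field_simp
  refine ⟨le_of_eq hE.symm, ?_⟩
  rw [hsum, hsumr, Finset.mul_sum]
  exact Finset.sum_le_sum fun k _ => aux_row_relu μ d_in d_out W b hWmeas hbmeas
    hWsymm hbsymm hWL2 hbL2 hindep u v k

end
end

section
/- Let u ∈ ℝ^{d_in} be a fixed vector, let W ∈ ℝ^{d_out × d_in} have independent entries W_{k,l} ~ N(0, 1/d_out), and let b ∈ ℝ^{d_out} have independent entries b_k ~ N(0, 1/d_out), with W and b independent. Then for every ε > 0: P( | 2‖φ(Wu + b)‖² / (1 + ‖u‖²) − 1 | ≥ ε ) ≤ 12/(d_out · ε²). -/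
open MeasureTheory ProbabilityTheory Real Matrix NNReal

noncomputable section

/-- The Euclidean norm of a vector in `ℝ^n`. -/
def euclNorm {n : ℕ} (x : Fin n → ℝ) : ℝ := Real.sqrt (x ⬝ᵥ x)




lemma sq_mul_exp_le' {c : ℝ} (hc : 0 < c) (x : ℝ) :
    x ^ 2 * exp (-c * x ^ 2) ≤ 1 / c := by
  have h1 : c * x ^ 2 ≤ exp (c * x ^ 2) :=
    le_trans (by linarith) (Real.add_one_le_exp _)
  have h2 : x ^ 2 ≤ 1 / c * exp (c * x ^ 2) := by
    rw [div_mul_eq_mul_div, le_div_iff₀ hc]; nlinarith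
  have h3 : exp (c * x^2) * exp (-c * x^2) = 1 := by
    rw [← Real.exp_add]; simp
  calc x ^ 2 * exp (-c * x ^ 2) ≤ 1 / c * exp (c * x ^ 2) * exp (-c * x ^ 2) :=
        mul_le_mul_of_nonneg_right h2 (exp_nonneg _)
    _ = 1 / c := by rw [mul_assoc, h3, mul_one]

lemma exp_sq_half {c : ℝ} (x : ℝ) : (exp (-(c/2) * x ^ 2)) ^ 2 = exp (-c * x ^ 2) := by
  rw [← Real.exp_nat_mul]
  congr 1
  push_cast
  ring

lemma sq_split {c : ℝ} (x : ℝ) :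
    x ^ 2 * exp (-c * x ^ 2) = (x ^ 2 * exp (-(c/2) * x ^ 2)) * exp (-(c/2) * x ^ 2) := by
  have h : exp (-(c/2) * x^2) * exp (-(c/2) * x^2) = exp (-c * x^2) := by
    rw [← Real.exp_add]; congr 1; ring
  rw [mul_assoc, h]

lemma pow4_split {c : ℝ} (x : ℝ) :
    x ^ 4 * exp (-c * x ^ 2) = (x ^ 2 * exp (-(c/4) * x ^ 2)) ^ 2 * exp (-(c/2) * x ^ 2) := by
  have h : exp (-(c/4) * x^2) * exp (-(c/4) * x^2) * exp (-(c/2) * x^2) = exp (-c * x^2) := by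
    rw [← Real.exp_add, ← Real.exp_add]; congr 1; ring
  rw [mul_pow, ← h]; ring

lemma integrable_sq_exp {c : ℝ} (hc : 0 < c) :
    Integrable (fun x : ℝ => x ^ 2 * exp (-c * x ^ 2)) := by
  refine Integrable.mono ((integrable_exp_neg_mul_sq (by linarith : (0:ℝ) < c/2)).const_mul (1/(c/2)))
    ?_ ?_
  · exact ((measurable_id.pow_const 2).mul (((measurable_id.pow_const 2).const_mul
      (-c)).exp)).aestronglyMeasurable
  · filter_upwards with x
    rw [Real.norm_eq_abs, Real.norm_eq_abs, abs_of_nonneg (by positivity),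
      abs_of_nonneg (by positivity), sq_split]
    exact mul_le_mul_of_nonneg_right (sq_mul_exp_le' (by linarith) x) (exp_nonneg _)

lemma integrable_pow4_exp {c : ℝ} (hc : 0 < c) :
    Integrable (fun x : ℝ => x ^ 4 * exp (-c * x ^ 2)) := by
  refine Integrable.mono ((integrable_exp_neg_mul_sq (by linarith : (0:ℝ) < c/2)).const_mul ((1/(c/4))^2))
    ?_ ?_
  · exact ((measurable_id.pow_const 4).mul (((measurable_id.pow_const 2).const_mul
      (-c)).exp)).aestronglyMeasurable
  · filter_upwards with x
    rw [Real.norm_eq_abs, Real.norm_eq_abs, abs_of_nonneg (by positivity),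
      abs_of_nonneg (by positivity), pow4_split]
    refine mul_le_mul_of_nonneg_right ?_ (exp_nonneg _)
    exact pow_le_pow_left₀ (by positivity) (sq_mul_exp_le' (by linarith) x) 2

lemma integrable_mul_exp {c : ℝ} (hc : 0 < c) :
    Integrable (fun x : ℝ => x * exp (-c * x ^ 2)) := by
  refine Integrable.mono ((integrable_exp_neg_mul_sq hc).add (integrable_sq_exp hc)) ?_ ?_
  · exact (measurable_id.mul (((measurable_id.pow_const 2).const_mul (-c)).exp)).aestronglyMeasurable
  · filter_upwards with x
    simp only [Pi.add_apply, Real.norm_eq_abs]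
    rw [abs_mul, abs_of_nonneg (exp_nonneg _)]
    have h1 : |x| ≤ 1 + x ^ 2 := by nlinarith [abs_nonneg x, sq_abs x]
    have h3 : (0:ℝ) ≤ exp (-c*x^2) + x^2 * exp (-c*x^2) := by positivity
    rw [abs_of_nonneg h3]
    nlinarith [exp_nonneg (-c * x^2), mul_le_mul_of_nonneg_right h1 (exp_nonneg (-c * x^2))]

lemma integrable_pow3_exp {c : ℝ} (hc : 0 < c) :
    Integrable (fun x : ℝ => x ^ 3 * exp (-c * x ^ 2)) := by
  refine Integrable.mono ((integrable_exp_neg_mul_sq hc).add (integrable_pow4_exp hc)) ?_ ?_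
  · exact ((measurable_id.pow_const 3).mul (((measurable_id.pow_const 2).const_mul (-c)).exp)).aestronglyMeasurable
  · filter_upwards with x
    simp only [Pi.add_apply, Real.norm_eq_abs]
    rw [abs_mul, abs_of_nonneg (exp_nonneg _)]
    have h1 : |x ^ 3| ≤ 1 + x ^ 4 := by
      rw [abs_pow]
      rcases le_total (|x|) 1 with h | h
      · nlinarith [abs_nonneg x, pow_le_one₀ (abs_nonneg x) h (n := 3), sq_nonneg (x^2)]
      · have h4 : |x| ^ 3 ≤ |x| ^ 4 := pow_le_pow_right₀ h (by norm_num)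
        have h5 : |x| ^ 4 = x ^ 4 := by rw [← abs_pow, abs_of_nonneg (by positivity)]
        nlinarith
    have h3 : (0:ℝ) ≤ exp (-c*x^2) + x^4 * exp (-c*x^2) := by positivity
    rw [abs_of_nonneg h3]
    nlinarith [exp_nonneg (-c * x^2), mul_le_mul_of_nonneg_right h1 (exp_nonneg (-c * x^2))]

lemma integral_sq_exp {c : ℝ} (hc : 0 < c) :
    ∫ x : ℝ, x ^ 2 * exp (-c * x ^ 2) = Real.sqrt (π / c) / (2 * c) := by
  have hderiv : ∀ x : ℝ, HasDerivAt (fun y : ℝ => y * exp (-c * y ^ 2))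
      (exp (-c * x ^ 2) - 2 * c * (x ^ 2 * exp (-c * x ^ 2))) x := by
    intro x
    have h := (hasDerivAt_id x).mul (((hasDerivAt_pow 2 x).const_mul (-c)).exp)
    convert! h using 1
    simp [pow_one]
    ring
  have h0 := integral_eq_zero_of_hasDerivAt_of_integrable hderiv
    (((integrable_exp_neg_mul_sq hc)).sub ((integrable_sq_exp hc).const_mul (2*c)))
    (integrable_mul_exp hc)
  rw [integral_sub (integrable_exp_neg_mul_sq hc) ((integrable_sq_exp hc).const_mul (2*c)),
    integral_const_mul, integral_gaussian] at h0
  have h2c : (2:ℝ) * c ≠ 0 := by positivity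
  field_simp at h0 ⊢
  linarith

lemma integral_pow4_exp {c : ℝ} (hc : 0 < c) :
    ∫ x : ℝ, x ^ 4 * exp (-c * x ^ 2) = 3 * Real.sqrt (π / c) / (4 * c ^ 2) := by
  have hderiv : ∀ x : ℝ, HasDerivAt (fun y : ℝ => y ^ 3 * exp (-c * y ^ 2))
      (3 * (x ^ 2 * exp (-c * x ^ 2)) - 2 * c * (x ^ 4 * exp (-c * x ^ 2))) x := by
    intro x
    have h := (hasDerivAt_pow 3 x).mul (((hasDerivAt_pow 2 x).const_mul (-c)).exp)
    convert! h using 1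
    simp
    ring
  have h0 := integral_eq_zero_of_hasDerivAt_of_integrable hderiv
    (((integrable_sq_exp hc).const_mul 3).sub ((integrable_pow4_exp hc).const_mul (2*c)))
    (integrable_pow3_exp hc)
  rw [integral_sub ((integrable_sq_exp hc).const_mul 3) ((integrable_pow4_exp hc).const_mul (2*c)),
    integral_const_mul, integral_const_mul, integral_sq_exp hc] at h0
  have h2c : (2:ℝ) * c ≠ 0 := by positivity
  have hc' : c ≠ 0 := ne_of_gt hc
  field_simp at h0 ⊢
  linarith



-- transfer: integral over gaussianReal as weighted Lebesgue integral
lemma integral_gaussianReal_eq {v : ℝ≥0} (hv : v ≠ 0) (g : ℝ → ℝ) :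
    ∫ x, g x ∂(gaussianReal 0 v) = ∫ x, gaussianPDFReal 0 v x * g x := by
  rw [gaussianReal_of_var_ne_zero _ hv]
  have hf : Measurable fun x => (gaussianPDFReal 0 v x).toNNReal :=
    (measurable_gaussianPDFReal 0 v).real_toNNReal
  have heq : (gaussianPDF 0 v) = fun x => ((gaussianPDFReal 0 v x).toNNReal : ENNReal) := rfl
  rw [heq, integral_withDensity_eq_integral_smul hf g]
  congr 1 with x
  simp [NNReal.smul_def, Real.coe_toNNReal _ (gaussianPDFReal_nonneg 0 v x)]

lemma integrable_gaussianReal_iff {v : ℝ≥0} (hv : v ≠ 0) {g : ℝ → ℝ} (hg : Measurable g) :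
    Integrable g (gaussianReal 0 v) ↔ Integrable (fun x => gaussianPDFReal 0 v x * g x) := by
  rw [gaussianReal_of_var_ne_zero _ hv]
  have hf : Measurable fun x => (gaussianPDFReal 0 v x).toNNReal :=
    (measurable_gaussianPDFReal 0 v).real_toNNReal
  have heq : (gaussianPDF 0 v) = fun x => ((gaussianPDFReal 0 v x).toNNReal : ENNReal) := rfl
  rw [heq, integrable_withDensity_iff_integrable_smul hf]
  constructor <;> intro h <;> [skip; skip] <;>
  · refine h.congr ?_
    filter_upwards with x
    simp [NNReal.smul_def, Real.coe_toNNReal _ (gaussianPDFReal_nonneg 0 v x)]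

lemma gaussianPDFReal_zero_mean (v : ℝ≥0) (x : ℝ) :
    gaussianPDFReal 0 v x = (Real.sqrt (2 * π * v))⁻¹ * rexp (-(2*(v:ℝ))⁻¹ * x ^ 2) := by
  have h : -(x-(0:ℝ))^2/(2*(v:ℝ)) = -(2*(v:ℝ))⁻¹ * x^2 := by ring
  rw [gaussianPDFReal, h]

lemma integrable_pow_two_gaussianReal {v : ℝ≥0} (hv : v ≠ 0) :
    Integrable (fun x => x ^ 2) (gaussianReal 0 v) := by
  have hvpos : (0:ℝ) < v := lt_of_le_of_ne v.coe_nonneg (by exact_mod_cast hv.symm)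
  have hc : (0:ℝ) < (2*(v:ℝ))⁻¹ := by positivity
  rw [integrable_gaussianReal_iff hv (measurable_id'.pow_const 2)]
  refine Integrable.congr (((integrable_sq_exp hc).const_mul ((Real.sqrt (2 * π * v))⁻¹))) ?_
  filter_upwards with x
  rw [gaussianPDFReal_zero_mean]
  ring

lemma integrable_pow_four_gaussianReal {v : ℝ≥0} (hv : v ≠ 0) :
    Integrable (fun x => x ^ 4) (gaussianReal 0 v) := by
  have hvpos : (0:ℝ) < v := lt_of_le_of_ne v.coe_nonneg (by exact_mod_cast hv.symm)
  have hc : (0:ℝ) < (2*(v:ℝ))⁻¹ := by positivity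
  rw [integrable_gaussianReal_iff hv (measurable_id'.pow_const 4)]
  refine Integrable.congr (((integrable_pow4_exp hc).const_mul ((Real.sqrt (2 * π * v))⁻¹))) ?_
  filter_upwards with x
  rw [gaussianPDFReal_zero_mean]
  ring

lemma integral_pow_two_gaussianReal {v : ℝ≥0} (hv : v ≠ 0) :
    ∫ x, x ^ 2 ∂(gaussianReal 0 v) = v := by
  have hvpos : (0:ℝ) < v := lt_of_le_of_ne v.coe_nonneg (by exact_mod_cast hv.symm)
  have hc : (0:ℝ) < (2*(v:ℝ))⁻¹ := by positivity
  rw [integral_gaussianReal_eq hv]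
  have : ∀ x : ℝ, gaussianPDFReal 0 v x * x ^ 2
      = (Real.sqrt (2 * π * v))⁻¹ * (x ^ 2 * rexp (-(2*(v:ℝ))⁻¹ * x ^ 2)) := by
    intro x; rw [gaussianPDFReal_zero_mean]; ring
  simp_rw [this]
  rw [integral_const_mul, integral_sq_exp hc]
  rw [show π / (2*(v:ℝ))⁻¹ = 2 * π * v by field_simp]
  have hs : (0:ℝ) < Real.sqrt (2 * π * v) := Real.sqrt_pos.2 (by positivity)
  field_simp

lemma integral_pow_four_gaussianReal {v : ℝ≥0} (hv : v ≠ 0) :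
    ∫ x, x ^ 4 ∂(gaussianReal 0 v) = 3 * v ^ 2 := by
  have hvpos : (0:ℝ) < v := lt_of_le_of_ne v.coe_nonneg (by exact_mod_cast hv.symm)
  have hc : (0:ℝ) < (2*(v:ℝ))⁻¹ := by positivity
  rw [integral_gaussianReal_eq hv]
  have : ∀ x : ℝ, gaussianPDFReal 0 v x * x ^ 4
      = (Real.sqrt (2 * π * v))⁻¹ * (x ^ 4 * rexp (-(2*(v:ℝ))⁻¹ * x ^ 2)) := by
    intro x; rw [gaussianPDFReal_zero_mean]; ring
  simp_rw [this]
  rw [integral_const_mul, integral_pow4_exp hc]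
  rw [show π / (2*(v:ℝ))⁻¹ = 2 * π * v by field_simp]
  have hs : (0:ℝ) < Real.sqrt (2 * π * v) := Real.sqrt_pos.2 (by positivity)
  have hs : (0:ℝ) < Real.sqrt (2 * π * v) := Real.sqrt_pos.2 (by positivity)
  have hv2 : (2*(v:ℝ)) ≠ 0 := by positivity
  field_simp
  ring






lemma gaussianReal_map_neg (v : ℝ≥0) :
    (gaussianReal 0 v).map (fun x : ℝ => -x) = gaussianReal 0 v := by
  have h := gaussianReal_map_const_mul (μ := 0) (v := v) (-1)
  have h1 : (((-1:ℝ)) * ·) = (fun x : ℝ => -x) := by funext x; simp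
  have h2 : (NNReal.mk ((-1:ℝ)^2) (sq_nonneg _)) = 1 := by ext; norm_num
  rw [h1, h2, mul_zero, one_mul] at h
  exact h

lemma relu_sq_le (x : ℝ) : max x 0 ^ 2 ≤ x ^ 2 := by
  rcases le_total x 0 with h | h
  · rw [max_eq_right h]; norm_num; positivity
  · rw [max_eq_left h]

lemma relu_pow4_le (x : ℝ) : max x 0 ^ 4 ≤ x ^ 4 := by
  rcases le_total x 0 with h | h
  · rw [max_eq_right h]; norm_num; positivity
  · rw [max_eq_left h]

lemma integrable_relu_sq_gaussianReal {v : ℝ≥0} (hv : v ≠ 0) :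
    Integrable (fun x : ℝ => max x 0 ^ 2) (gaussianReal 0 v) := by
  refine Integrable.mono (integrable_pow_two_gaussianReal hv)
    ((measurable_id'.max measurable_const).pow_const 2).aestronglyMeasurable ?_
  filter_upwards with x
  rw [Real.norm_eq_abs, Real.norm_eq_abs, abs_of_nonneg (by positivity),
    abs_of_nonneg (sq_nonneg x)]
  exact relu_sq_le x

lemma integrable_relu_pow4_gaussianReal {v : ℝ≥0} (hv : v ≠ 0) :
    Integrable (fun x : ℝ => max x 0 ^ 4) (gaussianReal 0 v) := by
  refine Integrable.mono (integrable_pow_four_gaussianReal hv)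
    ((measurable_id'.max measurable_const).pow_const 4).aestronglyMeasurable ?_
  filter_upwards with x
  rw [Real.norm_eq_abs, Real.norm_eq_abs, abs_of_nonneg (by positivity),
    abs_of_nonneg (by positivity)]
  exact relu_pow4_le x

lemma integrable_neg_relu_sq_gaussianReal {v : ℝ≥0} (hv : v ≠ 0) :
    Integrable (fun x : ℝ => max (-x) 0 ^ 2) (gaussianReal 0 v) := by
  refine Integrable.mono (integrable_pow_two_gaussianReal hv)
    ((measurable_id'.neg.max measurable_const).pow_const 2).aestronglyMeasurable ?_
  filter_upwards with x
  rw [Real.norm_eq_abs, Real.norm_eq_abs, abs_of_nonneg (by positivity),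
    abs_of_nonneg (sq_nonneg x)]
  have := relu_sq_le (-x)
  simpa using this

lemma integral_relu_sq_gaussianReal {v : ℝ≥0} (hv : v ≠ 0) :
    ∫ x, max x 0 ^ 2 ∂(gaussianReal 0 v) = v / 2 := by
  have hmap : ∫ x, max (-x) 0 ^ 2 ∂(gaussianReal 0 v)
      = ∫ x, max x 0 ^ 2 ∂(gaussianReal 0 v) := by
    have : ∫ x, max x 0 ^ 2 ∂((gaussianReal 0 v).map (fun x : ℝ => -x))
        = ∫ x, max (-x) 0 ^ 2 ∂(gaussianReal 0 v) := by
      rw [integral_map measurable_neg.aemeasurable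
        ((measurable_id'.max measurable_const).pow_const 2).aestronglyMeasurable]
    rw [← this, _root_.gaussianReal_map_neg]
  have hsum : ∀ x : ℝ, max x 0 ^ 2 + max (-x) 0 ^ 2 = x ^ 2 := by
    intro x
    rcases le_total x 0 with h | h
    · rw [max_eq_right h, max_eq_left (by linarith)]; ring
    · rw [max_eq_left h, max_eq_right (by linarith)]; ring
  have h := integral_add (integrable_relu_sq_gaussianReal hv)
    (integrable_neg_relu_sq_gaussianReal hv)
  simp_rw [hsum] at h
  rw [integral_pow_two_gaussianReal hv, hmap] at h
  linarith

lemma integral_relu_pow4_le_gaussianReal {v : ℝ≥0} (hv : v ≠ 0) :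
    ∫ x, max x 0 ^ 4 ∂(gaussianReal 0 v) ≤ 3 * v ^ 2 := by
  rw [← integral_pow_four_gaussianReal hv]
  exact integral_mono (integrable_relu_pow4_gaussianReal hv)
    (integrable_pow_four_gaussianReal hv) relu_pow4_le



lemma gaussianPDFReal_conv {a b : ℝ≥0} (ha : a ≠ 0) (hb : b ≠ 0) (z : ℝ) :
    ∫ x, gaussianPDFReal 0 a x * gaussianPDFReal x b z = gaussianPDFReal 0 (a + b) z := by
  have hA : (0:ℝ) < a := lt_of_le_of_ne a.coe_nonneg (by exact_mod_cast ha.symm)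
  have hB : (0:ℝ) < b := lt_of_le_of_ne b.coe_nonneg (by exact_mod_cast hb.symm)
  set A : ℝ := (a : ℝ)
  set B : ℝ := (b : ℝ)
  set k : ℝ := (A + B) / (2 * A * B) with hk
  have hkpos : 0 < k := by positivity
  set m : ℝ := A * z / (A + B) with hm
  have hpt : ∀ x : ℝ, gaussianPDFReal 0 a x * gaussianPDFReal x b z
      = ((Real.sqrt (2 * π * A))⁻¹ * (Real.sqrt (2 * π * B))⁻¹
          * rexp (- z ^ 2 / (2 * (A + B)))) * rexp (-k * (x - m) ^ 2) := by
    intro x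
    rw [gaussianPDFReal, gaussianPDFReal]
    have hexp : rexp (- (x - 0) ^ 2 / (2 * A)) * rexp (- (z - x) ^ 2 / (2 * B))
        = rexp (- z ^ 2 / (2 * (A + B))) * rexp (-k * (x - m) ^ 2) := by
      rw [← Real.exp_add, ← Real.exp_add]
      congr 1
      rw [hk, hm]
      field_simp
      ring
    calc (Real.sqrt (2 * π * A))⁻¹ * rexp (- (x - 0) ^ 2 / (2 * A))
            * ((Real.sqrt (2 * π * B))⁻¹ * rexp (- (z - x) ^ 2 / (2 * B)))
        = (Real.sqrt (2 * π * A))⁻¹ * (Real.sqrt (2 * π * B))⁻¹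
            * (rexp (- (x - 0) ^ 2 / (2 * A)) * rexp (- (z - x) ^ 2 / (2 * B))) := by ring
      _ = _ := by rw [hexp]; ring
  simp_rw [hpt]
  rw [integral_const_mul]
  have hshift : ∫ x : ℝ, rexp (-k * (x - m) ^ 2)
      = ∫ x : ℝ, rexp (-k * x ^ 2) :=
    integral_sub_right_eq_self (fun y : ℝ => rexp (-k * y ^ 2)) m
  rw [hshift, integral_gaussian]
  rw [gaussianPDFReal]
  have hsqA : (0:ℝ) < Real.sqrt (2 * π * A) := Real.sqrt_pos.2 (by positivity)
  have hsqB : (0:ℝ) < Real.sqrt (2 * π * B) := Real.sqrt_pos.2 (by positivity)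
  have hconst : (Real.sqrt (2 * π * A))⁻¹ * (Real.sqrt (2 * π * B))⁻¹ * Real.sqrt (π / k)
      = (Real.sqrt (2 * π * (A + B)))⁻¹ := by
    rw [← Real.sqrt_inv, ← Real.sqrt_inv, ← Real.sqrt_mul (by positivity),
      ← Real.sqrt_mul (by positivity), ← Real.sqrt_inv]
    congr 1
    rw [hk]
    field_simp
  have hAB : ((a + b : ℝ≥0) : ℝ) = A + B := by push_cast; ring
  rw [hAB]
  calc (Real.sqrt (2 * π * A))⁻¹ * (Real.sqrt (2 * π * B))⁻¹ * rexp (- z ^ 2 / (2 * (A + B)))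
        * Real.sqrt (π / k)
      = ((Real.sqrt (2 * π * A))⁻¹ * (Real.sqrt (2 * π * B))⁻¹ * Real.sqrt (π / k))
        * rexp (- z ^ 2 / (2 * (A + B))) := by ring
    _ = (Real.sqrt (2 * π * (A + B)))⁻¹ * rexp (- (z - 0) ^ 2 / (2 * (A + B))) := by
        rw [hconst, sub_zero]

lemma integrable_pdf_conv {a b : ℝ≥0} (ha : a ≠ 0) (hb : b ≠ 0) (z : ℝ) :
    Integrable (fun x => gaussianPDFReal 0 a x * gaussianPDFReal x b z) := by
  have hA : (0:ℝ) < a := lt_of_le_of_ne a.coe_nonneg (by exact_mod_cast ha.symm)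
  have hB : (0:ℝ) < b := lt_of_le_of_ne b.coe_nonneg (by exact_mod_cast hb.symm)
  set A : ℝ := (a : ℝ)
  set B : ℝ := (b : ℝ)
  set k : ℝ := (A + B) / (2 * A * B) with hk
  have hkpos : 0 < k := by positivity
  set m : ℝ := A * z / (A + B) with hm
  have hint : Integrable (fun x : ℝ => rexp (-k * (x - m) ^ 2)) :=
    (integrable_exp_neg_mul_sq hkpos).comp_sub_right m
  refine ((hint.const_mul ((Real.sqrt (2 * π * A))⁻¹ * (Real.sqrt (2 * π * B))⁻¹
    * rexp (- z ^ 2 / (2 * (A + B))))).congr ?_)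
  filter_upwards with x
  -- same pointwise identity, reversed
  rw [gaussianPDFReal, gaussianPDFReal]
  have hexp : rexp (- (x - 0) ^ 2 / (2 * A)) * rexp (- (z - x) ^ 2 / (2 * B))
      = rexp (- z ^ 2 / (2 * (A + B))) * rexp (-k * (x - m) ^ 2) := by
    rw [← Real.exp_add, ← Real.exp_add]
    congr 1
    rw [hk, hm]
    field_simp
    ring
  calc ((Real.sqrt (2 * π * A))⁻¹ * (Real.sqrt (2 * π * B))⁻¹
          * rexp (- z ^ 2 / (2 * (A + B)))) * rexp (-k * (x - m) ^ 2)
      = (Real.sqrt (2 * π * A))⁻¹ * (Real.sqrt (2 * π * B))⁻¹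
          * (rexp (- z ^ 2 / (2 * (A + B))) * rexp (-k * (x - m) ^ 2)) := by ring
    _ = (Real.sqrt (2 * π * A))⁻¹ * rexp (- (x - 0) ^ 2 / (2 * A))
          * ((Real.sqrt (2 * π * B))⁻¹ * rexp (- (z - x) ^ 2 / (2 * B))) := by
        rw [← hexp]; ring

lemma lintegral_gaussianPDF_conv {a b : ℝ≥0} (ha : a ≠ 0) (hb : b ≠ 0) (z : ℝ) :
    ∫⁻ x, gaussianPDF 0 a x * gaussianPDF x b z = gaussianPDF 0 (a + b) z := by
  simp_rw [gaussianPDF, ← ENNReal.ofReal_mul (gaussianPDFReal_nonneg 0 a _)]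
  rw [← ofReal_integral_eq_lintegral_ofReal (integrable_pdf_conv ha hb z)
    (Filter.Eventually.of_forall fun x =>
      mul_nonneg (gaussianPDFReal_nonneg _ _ _) (gaussianPDFReal_nonneg _ _ _)),
    gaussianPDFReal_conv ha hb z]

lemma measurable_gaussianPDF_pair (b : ℝ≥0) :
    Measurable (fun q : ℝ × ℝ => gaussianPDF q.1 b q.2) := by
  unfold gaussianPDF gaussianPDFReal
  fun_prop

lemma gaussianReal_conv (a b : ℝ≥0) :
    Measure.map (fun p : ℝ × ℝ => p.1 + p.2)
      ((gaussianReal 0 a).prod (gaussianReal 0 b)) = gaussianReal 0 (a + b) := by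
  by_cases ha : a = 0
  · subst ha
    rw [gaussianReal_zero_var, Measure.dirac_prod, Measure.map_map measurable_add
      (measurable_prodMk_left), zero_add]
    have : ((fun p : ℝ × ℝ => p.1 + p.2) ∘ fun y : ℝ => ((0:ℝ), y)) = fun y : ℝ => 0 + y := rfl
    rw [this]
    simp_rw [zero_add]
    exact Measure.map_id
  by_cases hb : b = 0
  · subst hb
    rw [gaussianReal_zero_var, Measure.prod_dirac, Measure.map_map measurable_add
      (measurable_prodMk_right), add_zero]
    have : ((fun p : ℝ × ℝ => p.1 + p.2) ∘ fun x : ℝ => (x, (0:ℝ))) = fun x : ℝ => x + 0 := rfl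
    rw [this]
    simp_rw [add_zero]
    exact Measure.map_id
  have hab : a + b ≠ 0 := by
    intro h
    exact ha (by simpa using (add_eq_zero.1 h).1)
  ext s hs
  rw [Measure.map_apply (by fun_prop) hs, Measure.prod_apply (hs.preimage (by fun_prop))]
  have hstep : ∀ x : ℝ, gaussianReal 0 b (Prod.mk x ⁻¹' ((fun p : ℝ × ℝ => p.1 + p.2) ⁻¹' s))
      = ∫⁻ z in s, gaussianPDF x b z := by
    intro x
    have hpre : Prod.mk x ⁻¹' ((fun p : ℝ × ℝ => p.1 + p.2) ⁻¹' s)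
        = (fun y : ℝ => x + y) ⁻¹' s := rfl
    rw [hpre, ← Measure.map_apply (measurable_const_add x) hs, gaussianReal_map_const_add,
      zero_add, gaussianReal_apply _ hb]
  simp_rw [hstep]
  rw [gaussianReal_of_var_ne_zero _ ha]
  have hFmeas : Measurable fun x : ℝ => ∫⁻ z in s, gaussianPDF x b z := by
    exact (Measurable.lintegral_prod_right (measurable_gaussianPDF_pair b))
  rw [lintegral_withDensity_eq_lintegral_mul _ (measurable_gaussianPDF 0 a) hFmeas]
  simp only [Pi.mul_apply]
  have hswap : ∫⁻ x, gaussianPDF 0 a x * ∫⁻ z in s, gaussianPDF x b z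
      = ∫⁻ z in s, ∫⁻ x, gaussianPDF 0 a x * gaussianPDF x b z := by
    have h1 : ∀ x : ℝ, gaussianPDF 0 a x * ∫⁻ z in s, gaussianPDF x b z
        = ∫⁻ z in s, gaussianPDF 0 a x * gaussianPDF x b z := fun x =>
      (lintegral_const_mul _ ((measurable_gaussianPDF x b))).symm
    simp_rw [h1]
    exact lintegral_lintegral_swap
      (((measurable_gaussianPDF 0 a).comp measurable_fst).mul
        ((measurable_gaussianPDF_pair b))).aemeasurable
  rw [hswap]
  have h2 : ∀ z : ℝ, ∫⁻ x, gaussianPDF 0 a x * gaussianPDF x b z = gaussianPDF 0 (a+b) z :=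
    lintegral_gaussianPDF_conv ha hb
  rw [setLIntegral_congr_fun hs (fun z _ => h2 z),
    ← gaussianReal_apply _ hab]

lemma gaussianReal_add_rv {Ω : Type*} [MeasurableSpace Ω] {μ : Measure Ω} [IsProbabilityMeasure μ]
    {a b : ℝ≥0} {X Y : Ω → ℝ} (hX : Measurable X) (hY : Measurable Y)
    (hXY : IndepFun X Y μ) (hXl : Measure.map X μ = gaussianReal 0 a)
    (hYl : Measure.map Y μ = gaussianReal 0 b) :
    Measure.map (fun ω => X ω + Y ω) μ = gaussianReal 0 (a + b) := by
  have hprod := (indepFun_iff_map_prod_eq_prod_map_map hX.aemeasurable hY.aemeasurable).1 hXY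
  have hcomp : (fun ω => X ω + Y ω)
      = (fun p : ℝ × ℝ => p.1 + p.2) ∘ (fun ω => (X ω, Y ω)) := rfl
  rw [hcomp, ← Measure.map_map measurable_add (hX.prodMk hY), hprod, hXl, hYl,
    gaussianReal_conv]





lemma map_sum_gaussianReal {Ω ι : Type*} [MeasurableSpace Ω] {μ : Measure Ω}
    [IsProbabilityMeasure μ] (f : ι → Ω → ℝ) (hmeas : ∀ i, Measurable (f i))
    (hindep : iIndepFun f μ)
    (v : ι → ℝ≥0) (hlaw : ∀ i, Measure.map (f i) μ = gaussianReal 0 (v i))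
    (s : Finset ι) :
    Measure.map (fun ω => ∑ i ∈ s, f i ω) μ = gaussianReal 0 (∑ i ∈ s, v i) := by
  classical
  induction s using Finset.induction_on with
  | empty =>
      simp only [Finset.sum_empty]
      rw [Measure.map_const, gaussianReal_zero_var]
      simp
  | @insert i s his ih =>
      simp only [Finset.sum_insert his]
      have hsum_meas : Measurable (fun ω => ∑ j ∈ s, f j ω) := by
        exact Finset.measurable_sum s (fun j _ => hmeas j)
      have hfun : (∑ j ∈ s, f j) = (fun ω => ∑ j ∈ s, f j ω) := by
        funext ω; exact Finset.sum_apply ω s f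
      have hind : IndepFun (f i) (fun ω => ∑ j ∈ s, f j ω) μ := by
        have h := hindep.indepFun_finsetSum_of_notMem hmeas his
        rw [hfun] at h
        exact h.symm
      exact gaussianReal_add_rv (hmeas i) hsum_meas hind (hlaw i) ih





lemma sum_rowSet {d_out d_in : ℕ} {M : Type*} [AddCommMonoid M]
    (k : Fin d_out) (g : (Fin d_out × Fin d_in) ⊕ (Fin d_out) → M) :
    ∑ j ∈ ((Finset.univ.image fun l => (Sum.inl (k,l) :
        (Fin d_out × Fin d_in) ⊕ (Fin d_out))) ∪ {Sum.inr k}), g j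
      = (∑ l, g (Sum.inl (k,l))) + g (Sum.inr k) := by
  rw [Finset.sum_union (by simp), Finset.sum_image (by intro x _ y _ h; simpa using h),
    Finset.sum_singleton]

/-- Let `u ∈ ℝ^{d_in}` be fixed, let `W ∈ ℝ^{d_out × d_in}` have jointly
independent entries `W_{k,l} ~ N(0, 1/d_out)` and `b ∈ ℝ^{d_out}` independent entries
`b_k ~ N(0, 1/d_out)`, with `W` and `b` independent. Then for every `ε > 0`:
`P( |2‖φ(Wu + b)‖²/(1 + ‖u‖²) − 1| ≥ ε ) ≤ 12/(d_out·ε²)`. -/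
theorem statement8
    {Ω : Type*} [MeasurableSpace Ω] (μ : Measure Ω) [IsProbabilityMeasure μ]
    (d_in d_out : ℕ) (hdout : 0 < d_out)
    (W : Ω → Matrix (Fin d_out) (Fin d_in) ℝ) (b : Ω → Fin d_out → ℝ)
    (hWmeas : ∀ k l, Measurable fun ω => W ω k l)
    (hbmeas : ∀ k, Measurable fun ω => b ω k)
    (hWlaw : ∀ k l, Measure.map (fun ω => W ω k l) μ = gaussianReal 0 (d_out : ℝ≥0)⁻¹)
    (hblaw : ∀ k, Measure.map (fun ω => b ω k) μ = gaussianReal 0 (d_out : ℝ≥0)⁻¹)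
    (hindep : iIndepFun
      (Sum.elim (fun (kl : Fin d_out × Fin d_in) (ω : Ω) => W ω kl.1 kl.2)
        (fun (k : Fin d_out) (ω : Ω) => b ω k)) μ)
    (u : Fin d_in → ℝ) (ε : ℝ) (hε : 0 < ε) :
    (μ {ω | ε ≤ |2 * euclNorm (reluV ((W ω).mulVec u + b ω)) ^ 2 / (1 + euclNorm u ^ 2) - 1|}).toReal
      ≤ 12 / (d_out * ε ^ 2) := by
  classical
  set τ : ℝ≥0 := (d_out : ℝ≥0)⁻¹ with hτdef
  have hdne : (d_out : ℝ≥0) ≠ 0 := Nat.cast_ne_zero.2 hdout.ne'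
  have hτ : τ ≠ 0 := inv_ne_zero hdne
  set F := Sum.elim (fun (kl : Fin d_out × Fin d_in) (ω : Ω) => W ω kl.1 kl.2)
      (fun (k : Fin d_out) (ω : Ω) => b ω k) with hFdef
  have hFmeas : ∀ j, Measurable (F j) := by
    rintro (⟨k, l⟩ | k)
    · exact hWmeas k l
    · exact hbmeas k
  have hFlaw : ∀ j, Measure.map (F j) μ = gaussianReal 0 τ := by
    rintro (⟨k, l⟩ | k)
    · exact hWlaw k l
    · exact hblaw k
  set c : (Fin d_out × Fin d_in) ⊕ (Fin d_out) → ℝ :=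
    Sum.elim (fun kl => u kl.2) (fun _ => 1) with hcdef
  set G : ((Fin d_out × Fin d_in) ⊕ (Fin d_out)) → Ω → ℝ := fun j ω => c j * F j ω with hGdef
  have hGmeas : ∀ j, Measurable (G j) := fun j => (hFmeas j).const_mul (c j)
  have hGindep : iIndepFun G μ :=
    hindep.comp (fun j (x : ℝ) => c j * x) (fun j => measurable_const_mul (c j))
  set vG : ((Fin d_out × Fin d_in) ⊕ (Fin d_out)) → ℝ≥0 :=
    fun j => ((c j) ^ 2).toNNReal * τ with hvGdef
  have hGlaw : ∀ j, Measure.map (G j) μ = gaussianReal 0 (vG j) := by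
    intro j
    have hcomp : G j = (fun x => c j * x) ∘ F j := rfl
    rw [hcomp, ← Measure.map_map (measurable_const_mul (c j)) (hFmeas j), hFlaw j]
    have h := gaussianReal_map_const_mul (μ := 0) (v := τ) (c j)
    rw [mul_zero] at h
    have hmk : (NNReal.mk ((c j) ^ 2) (sq_nonneg _)) = ((c j) ^ 2).toNNReal := by
      ext; simp [Real.coe_toNNReal _ (sq_nonneg (c j))]
    rw [hmk] at h
    exact h
  set S : Fin d_out → Finset ((Fin d_out × Fin d_in) ⊕ (Fin d_out)) :=
    fun k => (Finset.univ.image fun l => Sum.inl (k, l)) ∪ {Sum.inr k} with hSdef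
  have hdisjS : ∀ k k', k ≠ k' → Disjoint (S k) (S k') := by
    intro k k' hkk'
    rw [Finset.disjoint_left]
    intro j hj hj'
    simp only [hSdef, Finset.mem_union, Finset.mem_image, Finset.mem_singleton,
      Finset.mem_univ, true_and] at hj hj'
    rcases hj with ⟨l, rfl⟩ | rfl <;> rcases hj' with ⟨l', h⟩ | h <;> simp_all
  set X : Fin d_out → Ω → ℝ := fun k ω => ∑ j ∈ S k, G j ω with hXdef
  have hXmeas : ∀ k, Measurable (X k) := fun k => Finset.measurable_sum _ (fun j _ => hGmeas j)
  set q : ℝ≥0 := ∑ l, ((u l) ^ 2).toNNReal with hqdef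
  set V : ℝ≥0 := (q + 1) * τ with hVdef
  have hV : V ≠ 0 :=
    mul_ne_zero (add_pos_of_nonneg_of_pos (zero_le : (0:ℝ≥0) ≤ q) zero_lt_one).ne' hτ
  have hXlaw : ∀ k, Measure.map (X k) μ = gaussianReal 0 V := by
    intro k
    simp only [hXdef]
    rw [map_sum_gaussianReal G hGmeas hGindep vG hGlaw (S k)]
    congr 1
    simp only [hSdef]
    rw [sum_rowSet k vG]
    simp only [hvGdef, hcdef, Sum.elim_inl, Sum.elim_inr]
    have h1 : ((1:ℝ) ^ 2).toNNReal = 1 := by norm_num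
    rw [h1, ← Finset.sum_mul, hVdef, hqdef, add_mul, one_mul]
  have hXeq : ∀ k ω, X k ω = (W ω).mulVec u k + b ω k := by
    intro k ω
    show ∑ j ∈ S k, G j ω = _
    simp only [hSdef]
    rw [sum_rowSet k (fun j => G j ω)]
    simp only [hGdef, hcdef, hFdef, Sum.elim_inl, Sum.elim_inr, one_mul]
    congr 1
    rw [Matrix.mulVec, dotProduct]
    exact Finset.sum_congr rfl (fun l _ => mul_comm _ _)
  set Y : Fin d_out → Ω → ℝ := fun k ω => max (X k ω) 0 ^ 2 with hYdef
  have hrelu_meas : Measurable (fun x : ℝ => max x 0 ^ 2) :=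
    (measurable_id'.max measurable_const).pow_const 2
  have hYmeas : ∀ k, Measurable (Y k) := fun k => hrelu_meas.comp (hXmeas k)
  have hYint : ∀ k, ∫ ω, Y k ω ∂μ = (V : ℝ) / 2 := by
    intro k
    have h := integral_map (μ := μ) (f := fun x : ℝ => max x 0 ^ 2) (hXmeas k).aemeasurable
      hrelu_meas.aestronglyMeasurable
    rw [hXlaw k, integral_relu_sq_gaussianReal hV] at h
    exact h.symm
  have hYmem : ∀ k, MemLp (Y k) 2 μ := by
    intro k
    refine (memLp_map_measure_iff hrelu_meas.aestronglyMeasurable (hXmeas k).aemeasurable).1 ?_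
    rw [hXlaw k, memLp_two_iff_integrable_sq hrelu_meas.aestronglyMeasurable]
    refine (integrable_relu_pow4_gaussianReal hV).congr ?_
    filter_upwards with x
    ring
  have hYvar : ∀ k, variance (Y k) μ ≤ 3 * (V : ℝ) ^ 2 := by
    intro k
    refine (variance_le_expectation_sq (hYmeas k).aestronglyMeasurable).trans ?_
    have hg4 : Measurable (fun x : ℝ => (max x 0 ^ 2) ^ 2) := hrelu_meas.pow_const 2
    have h := integral_map (μ := μ) (f := fun x : ℝ => (max x 0 ^ 2) ^ 2) (hXmeas k).aemeasurable
      hg4.aestronglyMeasurable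
    rw [hXlaw k] at h
    have heq : μ[(Y k) ^ 2] = ∫ x, (max x 0 ^ 2) ^ 2 ∂(gaussianReal 0 V) := by
      rw [h]
      rfl
    rw [heq]
    have heq2 : ∀ x : ℝ, (max x 0 ^ 2) ^ 2 = max x 0 ^ 4 := fun x => by ring
    simp_rw [heq2]
    exact integral_relu_pow4_le_gaussianReal hV
  have hYindep : Set.Pairwise ↑(Finset.univ : Finset (Fin d_out))
      (fun k k' => IndepFun (Y k) (Y k') μ) := by
    intro k _ k' _ hkk'
    have hbase := hindep.indepFun_finset (S k) (S k') (hdisjS k k' hkk') hFmeas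
    have hφmeas : ∀ k0 : Fin d_out,
        Measurable (fun g : ({x // x ∈ S k0} → ℝ) => max (∑ j ∈ (S k0).attach, c j.1 * g j) 0 ^ 2) := by
      intro k0
      exact ((Finset.measurable_sum _ (fun j _ =>
        (measurable_pi_apply j).const_mul _)).max measurable_const).pow_const 2
    have h := hbase.comp (hφmeas k) (hφmeas k')
    have hYcomp : ∀ k0 : Fin d_out,
        ((fun g : ({x // x ∈ S k0} → ℝ) => max (∑ j ∈ (S k0).attach, c j.1 * g j) 0 ^ 2)
          ∘ (fun ω (j : {x // x ∈ S k0}) => F j ω)) = Y k0 := by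
      intro k0
      funext ω
      show max (∑ j ∈ (S k0).attach, c j.1 * F j.1 ω) 0 ^ 2 = Y k0 ω
      rw [Finset.sum_attach (S k0) (fun j => c j * F j ω)]
    rw [hYcomp k, hYcomp k'] at h
    exact h
  -- assembling
  set q' : ℝ := euclNorm u ^ 2 with hq'def
  have hq'nonneg : 0 ≤ q' := by rw [hq'def]; positivity
  have hdot : (0:ℝ) ≤ u ⬝ᵥ u := by
    rw [dotProduct]
    exact Finset.sum_nonneg fun l _ => mul_self_nonneg (u l)
  have hq : (q : ℝ) = q' := by
    rw [hqdef, hq'def, euclNorm, Real.sq_sqrt hdot, dotProduct, NNReal.coe_sum]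
    refine Finset.sum_congr rfl fun l _ => ?_
    rw [Real.coe_toNNReal _ (sq_nonneg _)]
    ring
  have h1q : (0:ℝ) < 1 + q' := by linarith
  have hdpos : (0:ℝ) < d_out := Nat.cast_pos.2 hdout
  have hτcoe : (τ : ℝ) = ((d_out : ℝ))⁻¹ := by simp [hτdef]
  have hVcoe : (V : ℝ) = (1 + q') / d_out := by
    rw [hVdef, NNReal.coe_mul, NNReal.coe_add, NNReal.coe_one, hτcoe, hq]
    field_simp
    ring
  set T : Ω → ℝ := fun ω => ∑ k, Y k ω with hTdef
  have hTfun : (∑ k, Y k) = T := by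
    funext ω
    exact Finset.sum_apply ω Finset.univ Y
  have hTmem : MemLp T 2 μ := by
    rw [← hTfun]
    exact memLp_finsetSum' _ (fun k _ => hYmem k)
  have hTvar : variance T μ ≤ d_out * (3 * (V : ℝ) ^ 2) := by
    rw [← hTfun, IndepFun.variance_sum (fun k _ => hYmem k) hYindep]
    calc ∑ k, variance (Y k) μ ≤ ∑ _k : Fin d_out, 3 * (V : ℝ) ^ 2 :=
          Finset.sum_le_sum (fun k _ => hYvar k)
      _ = d_out * (3 * (V : ℝ) ^ 2) := by
          rw [Finset.sum_const, Finset.card_univ, Fintype.card_fin, nsmul_eq_mul]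
  have hTmean : ∫ ω, T ω ∂μ = d_out * ((V : ℝ) / 2) := by
    rw [hTdef]
    rw [integral_finset_sum Finset.univ (fun k _ => (hYmem k).integrable one_le_two)]
    simp_rw [hYint]
    rw [Finset.sum_const, Finset.card_univ, Fintype.card_fin, nsmul_eq_mul]
  set C : ℝ := 2 / (1 + q') with hCdef
  set Z : Ω → ℝ := fun ω => C * T ω with hZdef
  have hZsmul : Z = C • T := rfl
  have hZmem : MemLp Z 2 μ := by rw [hZsmul]; exact hTmem.const_smul C
  have hZmean : ∫ ω, Z ω ∂μ = 1 := by
    have hthis : ∫ ω, Z ω ∂μ = C * ∫ ω, T ω ∂μ := integral_const_mul C T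
    rw [hthis, hTmean, hVcoe, hCdef]
    field_simp
  have hZvar : variance Z μ ≤ 12 / d_out := by
    rw [hZsmul, variance_smul]
    calc C ^ 2 * variance T μ ≤ C ^ 2 * (d_out * (3 * (V : ℝ) ^ 2)) :=
          mul_le_mul_of_nonneg_left hTvar (sq_nonneg C)
      _ = (2 / (1 + q')) ^ 2 * (d_out * (3 * ((1 + q') / d_out) ^ 2)) := by rw [hVcoe, hCdef]
      _ = 12 / d_out := by field_simp; ring
  have hsets : {ω | ε ≤ |2 * euclNorm (reluV ((W ω).mulVec u + b ω)) ^ 2 / (1 + euclNorm u ^ 2) - 1|}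
      = {ω | ε ≤ |Z ω - μ[Z]|} := by
    ext ω
    simp only [Set.mem_setOf_eq]
    have hnorm : euclNorm (reluV ((W ω).mulVec u + b ω)) ^ 2 = T ω := by
      rw [euclNorm, Real.sq_sqrt (by
        rw [dotProduct]
        exact Finset.sum_nonneg fun k _ => mul_self_nonneg _), dotProduct, hTdef]
      refine Finset.sum_congr rfl fun k _ => ?_
      show reluV _ k * reluV _ k = Y k ω
      rw [hYdef]
      simp only [reluV, Pi.add_apply]
      rw [← hXeq k ω]
      ring
    rw [hZmean, hnorm, ← hq'def]
    have : 2 * T ω / (1 + q') = Z ω := by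
      rw [hZdef, hCdef]
      ring
    rw [this]
  rw [hsets]
  have hcheb := meas_ge_le_variance_div_sq (μ := μ) hZmem hε
  have hvarnn : 0 ≤ variance Z μ := variance_nonneg Z μ
  have hbound : variance Z μ / ε ^ 2 ≤ 12 / (d_out * ε ^ 2) := by
    rw [← div_div]
    gcongr
  calc (μ {ω | ε ≤ |Z ω - μ[Z]|}).toReal
      ≤ (ENNReal.ofReal (variance Z μ / ε ^ 2)).toReal :=
        ENNReal.toReal_mono ENNReal.ofReal_ne_top hcheb
    _ = variance Z μ / ε ^ 2 := ENNReal.toReal_ofReal (div_nonneg hvarnn (sq_nonneg ε))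
    _ ≤ 12 / (d_out * ε ^ 2) := hbound


end
end

section
/- Let u, v ∈ ℝ^n be nonzero vectors, set r = ‖u‖/‖v‖, and suppose 0 < cos(u,v) < 2r/(1 + r²). Then (1 + ⟨u,v⟩) / ( √(1 + ‖u‖²) · √(1 + ‖v‖²) ) > ⟨u,v⟩ / (‖u‖·‖v‖). -/
open Matrix

noncomputable section

/-- The cosine similarity between two vectors in `ℝ^n`. -/
def cosSim {n : ℕ} (u v : Fin n → ℝ) : ℝ := u ⬝ᵥ v / (euclNorm u * euclNorm v)

lemma euclNorm_pos {n : ℕ} {x : Fin n → ℝ} (hx : x ≠ 0) : 0 < euclNorm x := by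
  have h1 : 0 ≤ x ⬝ᵥ x := by
    unfold dotProduct
    exact Finset.sum_nonneg fun i _ => mul_self_nonneg _
  have h2 : x ⬝ᵥ x ≠ 0 := by
    intro h
    exact hx ((dotProduct_self_eq_zero).mp h)
  exact Real.sqrt_pos.mpr (lt_of_le_of_ne h1 (Ne.symm h2))

lemma key (a b t : ℝ) (ha : 0 < a) (hb : 0 < b) (ht0 : 0 < t)
    (ht1 : t < 2 * (a / b) / (1 + (a / b) ^ 2)) :
    t < (1 + t * a * b) / (Real.sqrt (1 + a ^ 2) * Real.sqrt (1 + b ^ 2)) := by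
  have hb2 : (0:ℝ) < 1 + (a / b) ^ 2 := by positivity
  have hab : t * (a ^ 2 + b ^ 2) < 2 * a * b := by
    have h := (lt_div_iff₀ hb2).mp ht1
    have hbne : (b:ℝ) ≠ 0 := ne_of_gt hb
    have h' : t * (1 + (a/b)^2) * b^2 < 2 * (a/b) * b^2 :=
      mul_lt_mul_of_pos_right h (by positivity)
    have hq : (a/b)^2 * b^2 = a^2 := by field_simp
    calc t * (a ^ 2 + b ^ 2) = t * (1 + (a/b)^2) * b^2 := by linear_combination (-t) * hq
      _ < 2 * (a/b) * b^2 := h'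
      _ = 2 * a * b := by field_simp
  have ht1' : t < 1 := by nlinarith [sq_nonneg (a - b), sq_nonneg (a/b - 1), mul_pos ha hb]
  set D := Real.sqrt (1 + a ^ 2) * Real.sqrt (1 + b ^ 2) with hD
  have hDpos : 0 < D := by positivity
  have hD2 : D ^ 2 = (1 + a ^ 2) * (1 + b ^ 2) := by
    rw [hD, mul_pow, Real.sq_sqrt (by positivity), Real.sq_sqrt (by positivity)]
  rw [lt_div_iff₀ hDpos]
  have hsq : (t * D) ^ 2 < (1 + t * a * b) ^ 2 := by
    have : t ^ 2 * ((1 + a ^ 2) * (1 + b ^ 2)) < (1 + t * a * b) ^ 2 := by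
      nlinarith [mul_pos ha hb, sq_nonneg t]
    calc (t * D)^2 = t ^ 2 * D ^ 2 := by ring
      _ = t ^ 2 * ((1 + a ^ 2) * (1 + b ^ 2)) := by rw [hD2]
      _ < (1 + t * a * b) ^ 2 := this
  have hrhs : 0 ≤ 1 + t * a * b := by positivity
  exact lt_of_pow_lt_pow_left₀ 2 hrhs hsq

/-- Let `u, v ∈ ℝ^n` be nonzero, set `r = ‖u‖/‖v‖`, and suppose
`0 < cos(u,v) < 2r/(1 + r²)`. Then
`(1 + ⟨u,v⟩)/(√(1 + ‖u‖²)·√(1 + ‖v‖²)) > ⟨u,v⟩/(‖u‖·‖v‖)`. -/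
theorem statement11 {n : ℕ} (u v : Fin n → ℝ) (hu : u ≠ 0) (hv : v ≠ 0)
    (hcos0 : 0 < cosSim u v)
    (hcos1 : cosSim u v <
      2 * (euclNorm u / euclNorm v) / (1 + (euclNorm u / euclNorm v) ^ 2)) :
    u ⬝ᵥ v / (euclNorm u * euclNorm v) <
      (1 + u ⬝ᵥ v) / (Real.sqrt (1 + euclNorm u ^ 2) * Real.sqrt (1 + euclNorm v ^ 2)) := by
  have ha := euclNorm_pos hu
  have hb := euclNorm_pos hv
  set a := euclNorm u
  set b := euclNorm v
  set t := cosSim u v with htdef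
  have hc : u ⬝ᵥ v = t * a * b := by
    rw [htdef]; unfold cosSim
    field_simp
    have ha' : a ≠ 0 := ha.ne'
    have hb' : b ≠ 0 := hb.ne'
    show u ⬝ᵥ v = u ⬝ᵥ v * a * b / (a * b)
    field_simp
  rw [show u ⬝ᵥ v / (a * b) = t from rfl, hc]
  exact key a b t ha hb hcos0 hcos1

end
end
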